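/- arXiv:1105.1605 — 2 statements merged into one kernel-verified Lean document; each statement's English description precedes it below -/
import Mathlib

section
/- Let (X, d) be a non-Archimedean metric space, let M̄♭(X) = {all balls in X} ∪ {{x} : x ∈ X} with the Hausdorff distance d_H, and let f : [0, ∞) → ℝ be a continuous function. Define ρ_f : M̄♭(X) → ℝ by ρ_f(A) = f(diam(A)). Then ρ_f is uniformly continuous on (M̄♭(X), d_H). -/
open scoped ENNReal

/-- A ball in a metric space: an open or closed ball of positive radius. -/
def IsBall {X : Type*} [MetricSpace X] (B : Set X) : Prop :=
  ∃ (a : X) (r : ℝ), 0 < r ∧ (B = Metric.ball a r ∨ B = Metric.closedBall a r)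

/-- `M̄♭(X) = M♭(X) ∪ {{x} : x ∈ X}`, inside the space of closed subsets of `X`
(with the Hausdorff distance as the (e)metric). -/
def MBallBar (X : Type*) [MetricSpace X] : Set (TopologicalSpace.Closeds X) :=
  {C | IsBall (C : Set X) ∨ ∃ x : X, (C : Set X) = {x}}

lemma edist_ultra {X : Type*} [MetricSpace X]
    (hna : ∀ x y z : X, dist x z ≤ max (dist x y) (dist y z)) (x y z : X) :
    edist x z ≤ max (edist x y) (edist y z) := by
  rw [edist_dist, edist_dist, edist_dist]
  rcases le_total (dist x y) (dist y z) with h | h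
  · exact le_trans (ENNReal.ofReal_le_ofReal ((hna x y z).trans (max_le h le_rfl)))
      (le_max_right _ _)
  · exact le_trans (ENNReal.ofReal_le_ofReal ((hna x y z).trans (max_le le_rfl h)))
      (le_max_left _ _)

lemma ediam_le_max {X : Type*} [MetricSpace X]
    (hna : ∀ x y z : X, dist x z ≤ max (dist x y) (dist y z)) (s t : Set X) :
    EMetric.diam s ≤ max (EMetric.hausdorffEdist s t) (EMetric.diam t) := by
  refine EMetric.diam_le fun x hx y hy => ?_
  by_contra h
  push_neg at h
  have hH : EMetric.hausdorffEdist s t < edist x y := (le_max_left _ _).trans_lt h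
  have hD : EMetric.diam t < edist x y := (le_max_right _ _).trans_lt h
  obtain ⟨η, hη1, hη2⟩ := exists_between hH
  obtain ⟨x', hx't, hxx'⟩ := EMetric.exists_edist_lt_of_hausdorffEdist_lt hx hη1
  obtain ⟨y', hy't, hyy'⟩ := EMetric.exists_edist_lt_of_hausdorffEdist_lt hy hη1
  have h1 : edist x y ≤ max (edist x x') (max (edist x' y') (edist y' y)) :=
    (edist_ultra hna x x' y).trans (max_le_max le_rfl (edist_ultra hna x' y' y))
  have h2 : edist x x' < edist x y := hxx'.trans hη2
  have h3 : edist x' y' < edist x y := (EMetric.edist_le_diam_of_mem hx't hy't).trans_lt hD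
  have h4 : edist y' y < edist x y := by rw [edist_comm]; exact hyy'.trans hη2
  exact absurd h1 (not_le.2 (max_lt h2 (max_lt h3 h4)))

theorem stmt_9 {X : Type*} [MetricSpace X]
    (hna : ∀ x y z : X, dist x z ≤ max (dist x y) (dist y z))
    (f : ℝ → ℝ) (hf : ContinuousOn f (Set.Ici 0)) :
    UniformContinuous fun A : MBallBar X =>
      f (Metric.diam ((A : TopologicalSpace.Closeds X) : Set X)) := by
  rw [EMetric.uniformContinuous_iff]
  intro ε hε
  -- choose a real ε
  set εr : ℝ := (min 1 ε).toReal with hεr_def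
  have hεr_ne : min 1 ε ≠ ⊤ := ne_top_of_le_ne_top (by simp) (min_le_left _ _)
  have hεr_pos : 0 < εr := ENNReal.toReal_pos ((lt_min one_pos hε).ne') hεr_ne
  have hεr_le : ENNReal.ofReal εr ≤ ε := by
    rw [hεr_def, ENNReal.ofReal_toReal hεr_ne]; exact min_le_right _ _
  -- continuity of f at 0 from the right
  have hc : ContinuousWithinAt f (Set.Ici 0) 0 := hf 0 Set.self_mem_Ici
  rw [Metric.continuousWithinAt_iff] at hc
  obtain ⟨δ, hδ, hδf⟩ := hc (εr / 2) (by linarith)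
  refine ⟨ENNReal.ofReal (δ / 2), by simp [hδ], fun {A B} hAB => ?_⟩
  set sA : Set X := ((A : TopologicalSpace.Closeds X) : Set X) with hsA
  set sB : Set X := ((B : TopologicalSpace.Closeds X) : Set X) with hsB
  have hH : EMetric.hausdorffEdist sA sB < ENNReal.ofReal (δ / 2) := by
    rwa [Subtype.edist_eq, EMetric.Closeds.edist_eq] at hAB
  have h1 : EMetric.diam sA ≤ max (EMetric.hausdorffEdist sA sB) (EMetric.diam sB) :=
    ediam_le_max hna sA sB
  have h2 : EMetric.diam sB ≤ max (EMetric.hausdorffEdist sA sB) (EMetric.diam sA) := by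
    show Metric.ediam sB ≤ max (Metric.hausdorffEDist sA sB) (Metric.ediam sA)
    rw [EMetric.hausdorffEdist_comm]; exact ediam_le_max hna sB sA
  -- dichotomy
  rcases eq_or_ne (EMetric.diam sA) (EMetric.diam sB) with heq | hne
  · have heq' : Metric.diam sA = Metric.diam sB := by
      simp only [Metric.diam]; exact congrArg ENNReal.toReal heq
    simp only [hsA, hsB] at heq'
    rw [heq']
    simpa [hsB] using hε
  · -- both diameters are < ofReal (δ/2)
    have key : EMetric.diam sA < ENNReal.ofReal (δ / 2) ∧
        EMetric.diam sB < ENNReal.ofReal (δ / 2) := by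
      rcases hne.lt_or_gt with hlt | hlt
      · have hb : EMetric.diam sB ≤ EMetric.hausdorffEdist sA sB := by
          by_contra hbH
          push_neg at hbH
          exact absurd h2 (not_le.2 (max_lt hbH hlt))
        exact ⟨hlt.trans_le (hb.trans hH.le), hb.trans_lt hH⟩
      · have ha : EMetric.diam sA ≤ EMetric.hausdorffEdist sA sB := by
          by_contra haH
          push_neg at haH
          exact absurd h1 (not_le.2 (max_lt haH hlt))
        exact ⟨ha.trans_lt hH, hlt.trans_le (ha.trans hH.le)⟩
    have hA2 : Metric.diam sA < δ / 2 := ENNReal.toReal_lt_of_lt_ofReal key.1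
    have hB2 : Metric.diam sB < δ / 2 := ENNReal.toReal_lt_of_lt_ofReal key.2
    have hfa : dist (f (Metric.diam sA)) (f 0) < εr / 2 :=
      hδf (Metric.diam_nonneg) (by rw [Real.dist_eq, sub_zero, abs_of_nonneg Metric.diam_nonneg]; linarith)
    have hfb : dist (f (Metric.diam sB)) (f 0) < εr / 2 :=
      hδf (Metric.diam_nonneg) (by rw [Real.dist_eq, sub_zero, abs_of_nonneg Metric.diam_nonneg]; linarith)
    have hd : dist (f (Metric.diam sA)) (f (Metric.diam sB)) < εr := by
      calc dist (f (Metric.diam sA)) (f (Metric.diam sB))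
          ≤ dist (f (Metric.diam sA)) (f 0) + dist (f 0) (f (Metric.diam sB)) :=
            dist_triangle _ _ _
        _ < εr := by rw [dist_comm (f 0)]; linarith
    calc edist (f (Metric.diam sA)) (f (Metric.diam sB))
        = ENNReal.ofReal (dist (f (Metric.diam sA)) (f (Metric.diam sB))) := edist_dist _ _
      _ < ENNReal.ofReal εr := (ENNReal.ofReal_lt_ofReal_iff hεr_pos).2 hd
      _ ≤ ε := hεr_le
end

section
/- Let (X, d_X) and (Y, d_Y) be non-Archimedean metric spaces. For any maps f, g : X → Y, one has ρ_H(f, g) = ρ_b(f, g). In particular, if f or g is a Lipschitz map and min{dil f, dil g} ≥ 1, then ρ_s(f, g) ≤ min{dil f, dil g} · ρ_H(f, g). -/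
open scoped ENNReal

/-- The graph of a map `f : X → Y`, as a subset of `X × Y`. -/
def graphOf {X Y : Type*} (f : X → Y) : Set (X × Y) :=
  Set.range fun x => (x, f x)

/-- `ρ_H(f,g)`: the Hausdorff distance between the graphs of `f` and `g` in the
product `X × Y` equipped with the sup-metric (which is the product metric in Mathlib). -/
noncomputable def rhoH {X Y : Type*} [MetricSpace X] [MetricSpace Y] (f g : X → Y) : ℝ≥0∞ :=
  EMetric.hausdorffEdist (graphOf f) (graphOf g)

/-- `ρ_s(f,g) = sup_x d_Y(f x, g x)`. -/
noncomputable def rhoS {X Y : Type*} [MetricSpace X] [MetricSpace Y] (f g : X → Y) : ℝ≥0∞ :=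
  ⨆ x : X, edist (f x) (g x)

/-- `ρ_b(f,g)`: the infimum of those `ε > 0` such that for every `x ∈ X` there exist
`x', x'' ∈ B_x(ε)` with `d_Y(f x, g x') < ε` and `d_Y(g x, f x'') < ε`. -/
noncomputable def rhoB {X Y : Type*} [MetricSpace X] [MetricSpace Y] (f g : X → Y) : ℝ≥0∞ :=
  sInf {ε : ℝ≥0∞ | 0 < ε ∧ ∀ x : X,
    (∃ x' : X, edist x x' < ε ∧ edist (f x) (g x') < ε) ∧
    (∃ x'' : X, edist x x'' < ε ∧ edist (g x) (f x'') < ε)}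

/-- The dilatation `dil f = sup_{x₁ ≠ x₂} d_Y(f x₁, f x₂) / d_X(x₁, x₂)`
(equal to `∞` when `f` is not Lipschitz). -/
noncomputable def dil {X Y : Type*} [MetricSpace X] [MetricSpace Y] (f : X → Y) : ℝ≥0∞ :=
  ⨆ (x₁ : X) (x₂ : X) (_ : x₁ ≠ x₂), edist (f x₁) (f x₂) / edist x₁ x₂

private lemma edist_na {Y : Type*} [MetricSpace Y]
    (h : ∀ x y z : Y, dist x z ≤ max (dist x y) (dist y z)) (a b c : Y) :
    edist a c ≤ max (edist a b) (edist b c) := by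
  rw [edist_dist, edist_dist, edist_dist]
  refine (ENNReal.ofReal_le_ofReal (h a b c)).trans ?_
  rcases le_total (dist a b) (dist b c) with h' | h'
  · rw [max_eq_right h']; exact le_max_right _ _
  · rw [max_eq_left h']; exact le_max_left _ _

private lemma dil_le_of_lipschitz {X Y : Type*} [MetricSpace X] [MetricSpace Y]
    {f : X → Y} {c : NNReal} (h : LipschitzWith c f) : dil f ≤ c :=
  iSup_le fun a => iSup_le fun b => iSup_le fun _ => ENNReal.div_le_of_le_mul (h a b)

private lemma edist_le_dil {X Y : Type*} [MetricSpace X] [MetricSpace Y]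
    (f : X → Y) (a b : X) : edist (f a) (f b) ≤ dil f * edist a b := by
  rcases eq_or_ne a b with rfl | hab
  · simp
  · have h : edist (f a) (f b) / edist a b ≤ dil f :=
      le_iSup_of_le a (le_iSup_of_le b (le_iSup_of_le hab le_rfl))
    rwa [ENNReal.div_le_iff (by simpa using hab) (edist_ne_top a b)] at h

private lemma key_lemma {X Y : Type*} [MetricSpace X] [MetricSpace Y]
    (f g : X → Y) {ε : ℝ≥0∞} (hε : rhoH f g < ε) (x : X) :
    (∃ x' : X, edist x x' < ε ∧ edist (f x) (g x') < ε) ∧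
    (∃ x'' : X, edist x x'' < ε ∧ edist (g x) (f x'') < ε) := by
  constructor
  · have h1 : EMetric.infEdist (x, f x) (graphOf g) < ε :=
      lt_of_le_of_lt (EMetric.infEdist_le_hausdorffEdist_of_mem (show (x, f x) ∈ graphOf f from ⟨x, rfl⟩)) hε
    rw [EMetric.infEdist, EMetric.infEdist_lt_iff] at h1
    obtain ⟨p, ⟨x', rfl⟩, hd⟩ := h1
    rw [Prod.edist_eq] at hd
    exact ⟨x', (max_lt_iff.mp hd).1, (max_lt_iff.mp hd).2⟩
  · have h1 : EMetric.infEdist (x, g x) (graphOf f) < ε := by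
      refine lt_of_le_of_lt ?_ hε
      rw [rhoH, EMetric.hausdorffEdist, EMetric.hausdorffEdist_comm]
      exact EMetric.infEdist_le_hausdorffEdist_of_mem (show (x, g x) ∈ graphOf g from ⟨x, rfl⟩)
    rw [EMetric.infEdist, EMetric.infEdist_lt_iff] at h1
    obtain ⟨p, ⟨x'', rfl⟩, hd⟩ := h1
    rw [Prod.edist_eq] at hd
    exact ⟨x'', (max_lt_iff.mp hd).1, (max_lt_iff.mp hd).2⟩

theorem stmt_14 {X Y : Type*} [MetricSpace X] [MetricSpace Y]
    (hnaX : ∀ x y z : X, dist x z ≤ max (dist x y) (dist y z))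
    (hnaY : ∀ x y z : Y, dist x z ≤ max (dist x y) (dist y z))
    (f g : X → Y) :
    rhoH f g = rhoB f g ∧
    (((∃ c : NNReal, LipschitzWith c f) ∨ (∃ c : NNReal, LipschitzWith c g)) →
      1 ≤ min (dil f) (dil g) →
      rhoS f g ≤ min (dil f) (dil g) * rhoH f g) := by
  have hmem : Set.Ioi (rhoH f g) ⊆ {ε : ℝ≥0∞ | 0 < ε ∧ ∀ x : X,
      (∃ x' : X, edist x x' < ε ∧ edist (f x) (g x') < ε) ∧
      (∃ x'' : X, edist x x'' < ε ∧ edist (g x) (f x'') < ε)} := by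
    intro ε hε
    exact ⟨lt_of_le_of_lt zero_le hε, key_lemma f g hε⟩
  constructor
  · refine le_antisymm (le_sInf ?_) ?_
    · rintro ε ⟨hε0, hε⟩
      apply EMetric.hausdorffEdist_le_of_mem_edist
      · rintro p ⟨x, rfl⟩
        obtain ⟨x', hx', hfx'⟩ := (hε x).1
        exact ⟨(x', g x'), ⟨x', rfl⟩, by
          rw [Prod.edist_eq]; exact le_of_lt (max_lt hx' hfx')⟩
      · rintro p ⟨x, rfl⟩
        obtain ⟨x'', hx'', hgx''⟩ := (hε x).2
        exact ⟨(x'', f x''), ⟨x'', rfl⟩, by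
          rw [Prod.edist_eq]; exact le_of_lt (max_lt hx'' hgx'')⟩
    · refine (sInf_le_sInf hmem).trans (le_of_eq ?_)
      refine le_antisymm ?_ (le_sInf fun b hb => hb.le)
      by_contra h
      push_neg at h
      obtain ⟨c, hac, hcs⟩ := exists_between h
      exact (sInf_le (s := Set.Ioi (rhoH f g)) hac).not_gt hcs
  · intro hlip hmin
    set m := min (dil f) (dil g) with hm
    have hm1 : (1 : ℝ≥0∞) ≤ m := hmin
    have hm0 : m ≠ 0 := (lt_of_lt_of_le zero_lt_one hm1).ne'
    have hmtop : m ≠ ⊤ := by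
      rcases hlip with ⟨c, hc⟩ | ⟨c, hc⟩
      · exact ne_top_of_le_ne_top ENNReal.coe_ne_top
          ((min_le_left _ _).trans (dil_le_of_lipschitz hc))
      · exact ne_top_of_le_ne_top ENNReal.coe_ne_top
          ((min_le_right _ _).trans (dil_le_of_lipschitz hc))
    have hkey : ∀ ε : ℝ≥0∞, rhoH f g < ε → rhoS f g ≤ m * ε := by
      intro ε hε
      refine iSup_le fun x => ?_
      obtain ⟨⟨x', hx', hfx'⟩, ⟨x'', hx'', hgx''⟩⟩ := key_lemma f g hε x
      have hεm : ε ≤ m * ε := le_mul_of_one_le_left zero_le hm1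
      rcases min_cases (dil f) (dil g) with ⟨hmeq, _⟩ | ⟨hmeq, _⟩
      · calc edist (f x) (g x)
            ≤ max (edist (f x) (f x'')) (edist (f x'') (g x)) := edist_na hnaY _ _ _
          _ ≤ m * ε := max_le
              ((edist_le_dil f x x'').trans (by
                rw [hm, hmeq]; exact mul_le_mul_right hx''.le _))
              ((edist_comm (f x'') (g x) ▸ hgx''.le).trans hεm)
      · calc edist (f x) (g x)
            ≤ max (edist (f x) (g x')) (edist (g x') (g x)) := edist_na hnaY _ _ _
          _ ≤ m * ε := max_le (hfx'.le.trans hεm)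
              ((edist_le_dil g x' x).trans (by
                rw [hm, hmeq, edist_comm]; exact mul_le_mul_right hx'.le _))
    rcases eq_or_ne (rhoH f g) ⊤ with htop | htop
    · rw [htop, ENNReal.mul_top hm0]; exact le_top
    · refine ENNReal.le_of_forall_pos_le_add fun δ hδ _ => ?_
      have hδm : (δ : ℝ≥0∞) / m ≠ 0 := by
        simp [ENNReal.div_eq_zero_iff, hmtop, hδ.ne']
      calc rhoS f g ≤ m * (rhoH f g + (δ : ℝ≥0∞) / m) :=
            hkey _ (ENNReal.lt_add_right htop hδm)
        _ = m * rhoH f g + m * ((δ : ℝ≥0∞) / m) := by rw [mul_add]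
        _ = m * rhoH f g + δ := by rw [ENNReal.mul_div_cancel hm0 hmtop]
end
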